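/- The difference Δ E[rk(R_{r+1,t+1})] − Δ E[rk(R_{r,t})] equals Σ_{i=0}^{min(r,t)} Pr(rk(R_{r,t}) = i)·q^(i−r)·(q−1)·(q^(i−t)·q^(i−r)·q^(−2) − (q^(i−t)−1)(q^(i−r)−1)). -/

import Mathlib

open Submodule Module Set Matrix Finset
open scoped Classical

set_option linter.unusedSectionVars false
set_option maxHeartbeats 1000000

section Aux

variable {F : Type} [Field F] [Fintype F] [DecidableEq F]

lemma aux_finrank_span_insert_of_not_mem {K V : Type*} [Field K] [AddCommGroup V] [Module K V]
    [FiniteDimensional K V] (s : Set V) (b : V) (hb : b ∉ span K s) :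
    finrank K (span K (insert b s)) = finrank K (span K s) + 1 := by
  have hb0 : b ≠ 0 := fun h => hb (h ▸ zero_mem _)
  have hd : Disjoint (span K s) (K ∙ b) :=
    (Submodule.disjoint_span_singleton' hb0).mpr hb
  have := Submodule.finrank_sup_add_finrank_inf_eq (span K s) (K ∙ b)
  rw [hd.eq_bot, finrank_bot, add_zero, finrank_span_singleton hb0] at this
  rw [Submodule.span_insert, sup_comm]
  omega

/-- Append a column at the front of a matrix. -/
def auxColCons {r t : ℕ} (b : Fin r → F) (A : Matrix (Fin r) (Fin t) F) :
    Matrix (Fin r) (Fin (t + 1)) F := fun i => Fin.cons (b i) (A i)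

lemma aux_transpose_colCons {r t : ℕ} (b : Fin r → F) (A : Matrix (Fin r) (Fin t) F) :
    (auxColCons b A)ᵀ = Fin.cons b Aᵀ := by
  ext j i
  refine Fin.cases ?_ ?_ j <;> simp [auxColCons, Matrix.transpose_apply] <;> intros <;> rfl

lemma aux_range_transpose_colCons {r t : ℕ} (b : Fin r → F) (A : Matrix (Fin r) (Fin t) F) :
    Set.range (auxColCons b A)ᵀ = insert b (Set.range Aᵀ) := by
  rw [aux_transpose_colCons]; exact Fin.range_cons b Aᵀ

lemma aux_rank_colCons_of_mem {r t : ℕ} {b : Fin r → F} {A : Matrix (Fin r) (Fin t) F}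
    (hb : b ∈ span F (Set.range Aᵀ)) : (auxColCons b A).rank = A.rank := by
  rw [Matrix.rank_eq_finrank_span_cols, Matrix.rank_eq_finrank_span_cols, Matrix.col, Matrix.col,
    aux_range_transpose_colCons, Submodule.span_insert_eq_span hb]

lemma aux_rank_colCons_of_not_mem {r t : ℕ} {b : Fin r → F} {A : Matrix (Fin r) (Fin t) F}
    (hb : b ∉ span F (Set.range Aᵀ)) : (auxColCons b A).rank = A.rank + 1 := by
  rw [Matrix.rank_eq_finrank_span_cols, Matrix.rank_eq_finrank_span_cols, Matrix.col, Matrix.col,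
    aux_range_transpose_colCons, aux_finrank_span_insert_of_not_mem _ _ hb]

lemma aux_card_colSpace {r t : ℕ} (A : Matrix (Fin r) (Fin t) F) :
    Fintype.card (span F (Set.range Aᵀ)) = Fintype.card F ^ A.rank := by
  rw [Module.card_eq_pow_finrank (K := F) (V := ↥(span F (Set.range Aᵀ))),
    Matrix.rank_eq_finrank_span_cols, Matrix.col]

lemma aux_sum_mem_colSpace {r t : ℕ} (A : Matrix (Fin r) (Fin t) F) (g h : ℝ) :
    (∑ b : Fin r → F, if b ∈ span F (Set.range Aᵀ) then g else h)
      = (Fintype.card F : ℝ) ^ A.rank * g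
        + ((Fintype.card F : ℝ) ^ r - (Fintype.card F : ℝ) ^ A.rank) * h := by
  rw [Finset.sum_ite, Finset.sum_const, Finset.sum_const]
  have hc : (Finset.univ.filter (fun b : Fin r → F => b ∈ span F (Set.range Aᵀ))).card
      = Fintype.card F ^ A.rank := by
    rw [← aux_card_colSpace A, Fintype.card_subtype]
  have hle : Fintype.card F ^ A.rank ≤ Fintype.card (Fin r → F) := by
    rw [← hc]
    exact (Finset.card_filter_le Finset.univ _).trans (by simp)
  have hcn : (Finset.univ.filter (fun b : Fin r → F => ¬ b ∈ span F (Set.range Aᵀ))).card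
      = Fintype.card (Fin r → F) - Fintype.card F ^ A.rank := by
    rw [Finset.filter_not, Finset.card_sdiff_of_subset (Finset.filter_subset _ _), hc]
    simp
  rw [hc, hcn]
  have hcard : (Fintype.card (Fin r → F) : ℝ) = (Fintype.card F : ℝ) ^ r := by
    simp [Fintype.card_fun]
  rw [nsmul_eq_mul, nsmul_eq_mul]
  push_cast [Nat.cast_sub hle]
  rw [hcard]

/-- One step of the rank generating-function recursion. -/
noncomputable def rkStep (q : ℝ) (c : ℕ) (g : ℕ → ℝ) : ℕ → ℝ :=
  fun j => q ^ j * g j + (q ^ c - q ^ j) * g (j + 1)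

lemma aux_sum_rank_colCons {r t : ℕ} (A : Matrix (Fin r) (Fin t) F) (g : ℕ → ℝ) :
    (∑ b : Fin r → F, g ((auxColCons b A).rank))
      = rkStep (Fintype.card F : ℝ) r g A.rank := by
  rw [rkStep, ← aux_sum_mem_colSpace A (g A.rank) (g (A.rank + 1))]
  refine Finset.sum_congr rfl fun b _ => ?_
  split_ifs with h
  · rw [aux_rank_colCons_of_mem h]
  · rw [aux_rank_colCons_of_not_mem h]

/-- Matrices with `t+1` columns correspond to (first column, rest). -/
def auxColConsEquiv (r t : ℕ) : ((Fin r → F) × Matrix (Fin r) (Fin t) F)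
    ≃ Matrix (Fin r) (Fin (t + 1)) F where
  toFun p := auxColCons p.1 p.2
  invFun M := (fun i => M i 0, fun i j => M i j.succ)
  left_inv p := by ext i j <;> simp [auxColCons]
  right_inv M := by
    ext i j
    refine Fin.cases ?_ ?_ j <;> simp [auxColCons]

lemma colStep {r t : ℕ} (g : ℕ → ℝ) :
    (∑ M : Matrix (Fin r) (Fin (t + 1)) F, g M.rank)
      = ∑ A : Matrix (Fin r) (Fin t) F, rkStep (Fintype.card F : ℝ) r g A.rank := by
  rw [← Equiv.sum_comp (auxColConsEquiv r t) (fun M => g M.rank), Fintype.sum_prod_type]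
  rw [Finset.sum_comm]
  exact Finset.sum_congr rfl fun A _ => aux_sum_rank_colCons A g

lemma aux_transpose_rowCons {r t : ℕ} (c : Fin t → F) (A : Matrix (Fin r) (Fin t) F) :
    (show Matrix (Fin (r+1)) (Fin t) F from Fin.cons c A)ᵀ = auxColCons c Aᵀ := by
  ext j i
  refine Fin.cases ?_ ?_ i <;> simp [auxColCons, Matrix.transpose_apply] <;> intros <;> rfl

lemma aux_sum_rank_rowCons {r t : ℕ} (A : Matrix (Fin r) (Fin t) F) (g : ℕ → ℝ) :
    (∑ c : Fin t → F, g ((show Matrix (Fin (r+1)) (Fin t) F from Fin.cons c A).rank))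
      = rkStep (Fintype.card F : ℝ) t g A.rank := by
  have h : ∀ c : Fin t → F,
      (show Matrix (Fin (r+1)) (Fin t) F from Fin.cons c A).rank = (auxColCons c Aᵀ).rank := by
    intro c
    rw [← aux_transpose_rowCons, Matrix.rank_transpose]
  calc (∑ c : Fin t → F, g ((show Matrix (Fin (r+1)) (Fin t) F from Fin.cons c A).rank))
      = ∑ c : Fin t → F, g ((auxColCons c Aᵀ).rank) :=
        Finset.sum_congr rfl fun c _ => by rw [h c]
    _ = _ := by rw [aux_sum_rank_colCons Aᵀ g, Matrix.rank_transpose]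

def auxRowConsEquiv (r t : ℕ) : ((Fin t → F) × Matrix (Fin r) (Fin t) F)
    ≃ Matrix (Fin (r + 1)) (Fin t) F where
  toFun p := Fin.cons p.1 p.2
  invFun M := (M 0, fun i j => M i.succ j)
  left_inv p := by ext i j <;> simp <;> rfl
  right_inv M := by
    ext i j
    refine Fin.cases ?_ ?_ i <;> simp

lemma rowStep {r t : ℕ} (g : ℕ → ℝ) :
    (∑ M : Matrix (Fin (r + 1)) (Fin t) F, g M.rank)
      = ∑ A : Matrix (Fin r) (Fin t) F, rkStep (Fintype.card F : ℝ) t g A.rank := by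
  rw [← Equiv.sum_comp (auxRowConsEquiv r t) (fun M => g M.rank), Fintype.sum_prod_type]
  rw [Finset.sum_comm]
  exact Finset.sum_congr rfl fun A _ => aux_sum_rank_rowCons A g

lemma aux_card_matrix (a b : ℕ) :
    (Fintype.card (Matrix (Fin a) (Fin b) F) : ℝ) = (Fintype.card F : ℝ) ^ (a * b) := by
  have : Fintype.card (Matrix (Fin a) (Fin b) F) = Fintype.card F ^ (a * b) := by
    rw [← Fintype.card_congr (Matrix.of : (Fin a → Fin b → F) ≃ _)]
    simp [Fintype.card_fun, ← pow_mul, mul_comm]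
  rw [this]; push_cast; ring

end Aux



/-- Expected rank of an `r × t` uniformly random matrix over `F`. -/
noncomputable def expRank (F : Type) [Field F] [Fintype F] [DecidableEq F] (r t : ℕ) : ℝ :=
  (∑ A : Matrix (Fin r) (Fin t) F, (A.rank : ℝ)) /
    (Fintype.card (Matrix (Fin r) (Fin t) F) : ℝ)

/-- `Pr(rk(R_{r,t}) = i)` for an `r × t` uniformly random matrix over `F`. -/
noncomputable def probRank (F : Type) [Field F] [Fintype F] [DecidableEq F]
    (r t i : ℕ) : ℝ :=
  (∑ A : Matrix (Fin r) (Fin t) F, if A.rank = i then (1 : ℝ) else 0) /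
    (Fintype.card (Matrix (Fin r) (Fin t) F) : ℝ)

/-- `Δ E[rk(R_{r+1,t+1})] − Δ E[rk(R_{r,t})]
= Σ_{i=0}^{min(r,t)} Pr(rk(R_{r,t}) = i)·q^(i−r)·(q−1)·
  (q^(i−t)·q^(i−r)·q^(−2) − (q^(i−t)−1)(q^(i−r)−1))`. -/
theorem expRank_increment_diagonal_difference
    (F : Type) [Field F] [Fintype F] [DecidableEq F] (r t : ℕ) :
    (expRank F (r + 1) (t + 2) - expRank F (r + 1) (t + 1))
      - (expRank F r (t + 1) - expRank F r t)
    = ∑ i ∈ Finset.range (min r t + 1),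
        probRank F r t i * (Fintype.card F : ℝ) ^ ((i : ℤ) - r) *
          ((Fintype.card F : ℝ) - 1) *
          ((Fintype.card F : ℝ) ^ ((i : ℤ) - t) * (Fintype.card F : ℝ) ^ ((i : ℤ) - r) *
              (Fintype.card F : ℝ) ^ (-2 : ℤ)
            - ((Fintype.card F : ℝ) ^ ((i : ℤ) - t) - 1) *
                ((Fintype.card F : ℝ) ^ ((i : ℤ) - r) - 1)) := by
  classical
  have hq : (Fintype.card F : ℝ) ≠ 0 := Nat.cast_ne_zero.mpr Fintype.card_ne_zero
  set q : ℝ := (Fintype.card F : ℝ) with hqdef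
  -- numerator computations
  have N1 : expRank F (r + 1) (t + 2)
      = ∑ A : Matrix (Fin r) (Fin t) F,
          rkStep q t (rkStep q (r+1) (rkStep q (r+1) (fun j => (j : ℝ)))) A.rank
            / q ^ ((r+1) * (t+2)) := by
    have b : (∑ M : Matrix (Fin (r+1)) (Fin (t+2)) F, (M.rank : ℝ))
        = ∑ M : Matrix (Fin (r+1)) (Fin (t+1+1)) F, (M.rank : ℝ) := rfl
    rw [expRank, aux_card_matrix, b, colStep, colStep, rowStep, Finset.sum_div]
  have N2 : expRank F (r + 1) (t + 1)
      = ∑ A : Matrix (Fin r) (Fin t) F,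
          rkStep q t (rkStep q (r+1) (fun j => (j : ℝ))) A.rank / q ^ ((r+1) * (t+1)) := by
    rw [expRank, aux_card_matrix, colStep, rowStep, Finset.sum_div]
  have N3 : expRank F r (t + 1)
      = ∑ A : Matrix (Fin r) (Fin t) F,
          rkStep q r (fun j => (j : ℝ)) A.rank / q ^ (r * (t+1)) := by
    rw [expRank, aux_card_matrix, colStep, Finset.sum_div]
  have N4 : expRank F r t
      = ∑ A : Matrix (Fin r) (Fin t) F, (A.rank : ℝ) / q ^ (r * t) := by
    rw [expRank, aux_card_matrix, Finset.sum_div]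
  rw [N1, N2, N3, N4, ← Finset.sum_sub_distrib, ← Finset.sum_sub_distrib,
    ← Finset.sum_sub_distrib]
  -- right-hand side
  have R : ∀ i : ℕ, probRank F r t i * q ^ ((i : ℤ) - r) * (q - 1) *
        (q ^ ((i : ℤ) - t) * q ^ ((i : ℤ) - r) * q ^ (-2 : ℤ)
          - (q ^ ((i : ℤ) - t) - 1) * (q ^ ((i : ℤ) - r) - 1))
      = ∑ A : Matrix (Fin r) (Fin t) F,
          (if A.rank = i then
            (q ^ ((i : ℤ) - r) * (q - 1) *
              (q ^ ((i : ℤ) - t) * q ^ ((i : ℤ) - r) * q ^ (-2 : ℤ)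
                - (q ^ ((i : ℤ) - t) - 1) * (q ^ ((i : ℤ) - r) - 1))) / q ^ (r * t)
           else 0) := by
    intro i
    rw [probRank, aux_card_matrix, div_mul_eq_mul_div, div_mul_eq_mul_div,
      div_mul_eq_mul_div, Finset.sum_mul, Finset.sum_mul, Finset.sum_mul, Finset.sum_div]
    refine Finset.sum_congr rfl fun A _ => ?_
    split_ifs with h
    · rw [one_mul]
    · rw [zero_mul, zero_mul, zero_mul, zero_div]
  simp only [R]
  rw [Finset.sum_comm]
  refine Finset.sum_congr rfl fun A _ => ?_
  have hmem : A.rank ∈ Finset.range (min r t + 1) := by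
    rw [Finset.mem_range, Nat.lt_succ_iff, le_min_iff]
    exact ⟨A.rank_le_height, A.rank_le_width⟩
  rw [Finset.sum_ite_eq (Finset.range (min r t + 1)) A.rank, if_pos hmem]
  -- final scalar identity
  set i : ℕ := A.rank with hi
  have hz : ∀ m : ℕ, q ^ ((i : ℤ) - (m : ℤ)) = q ^ i / q ^ m := by
    intro m
    rw [zpow_sub₀ hq, zpow_natCast, zpow_natCast]
  have hz2 : q ^ (-2 : ℤ) = 1 / q ^ (2 : ℕ) := by
    rw [show (-2 : ℤ) = -((2:ℕ) : ℤ) by norm_num, _root_.zpow_neg, zpow_natCast, one_div]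
  simp only [rkStep, hz, hz2]
  push_cast
  field_simp
  ring
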